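/- Let 0 < R₁ < R₂, θ₁, θ₂ ∈ ℝ, and suppose C₀ = 0, where C₀ = R₁²R₂² + R₁²R₂θ₂ + R₁R₂²θ₁ + θ₁θ₂R₁(R₂−R₁). Define A₀(k) = R₁²R₂²k² + R₁²k cos(kR₂)sin(kR₂)θ₂ + R₂²k cos(kR₁)sin(kR₁)θ₁ + θ₁θ₂(cos(kR₁)cos(kR₂)sin(kR₁)sin(kR₂) − cos²(kR₂)sin²(kR₁)). Then A₀(k) = C₂k⁴ + O(k⁶) as k → 0⁺, where C₂ = −(2/3)R₁²R₂³θ₂ − (2/3)R₁³R₂²θ₁ + θ₁θ₂(−(2/3)(R₁³R₂ + R₁R₂³) + R₁²R₂² + (1/3)R₁⁴). -/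

import Mathlib

open Real

lemma mono_nonneg {F F' : ℝ → ℝ} (hF : ∀ x, HasDerivAt F (F' x) x) (h0 : F 0 = 0)
    (hpos : ∀ x, 0 ≤ x → 0 ≤ F' x) : ∀ x, 0 ≤ x → 0 ≤ F x := by
  intro x hx
  have hmono : MonotoneOn F (Set.Ici 0) := by
    apply monotoneOn_of_deriv_nonneg (convex_Ici 0)
      (fun y _ => (hF y).continuousAt.continuousWithinAt)
      (fun y _ => ((hF y).differentiableAt).differentiableWithinAt)
    intro y hy
    rw [(hF y).deriv]
    exact hpos y (le_of_lt (by simpa using hy))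
  have := hmono (Set.mem_Ici.mpr le_rfl) (Set.mem_Ici.mpr hx) hx
  linarith [this, h0.symm ▸ this]

lemma sin_ge_poly (x : ℝ) (hx : 0 ≤ x) : x - x ^ 3 / 6 ≤ Real.sin x := by
  have := mono_nonneg (F := fun x => Real.sin x - (x - x ^ 3 / 6))
    (F' := fun x => Real.cos x - (1 - x ^ 2 / 2))
    (fun x => by
      have h1 := Real.hasDerivAt_sin x
      have h2 : HasDerivAt (fun x : ℝ => x - x ^ 3 / 6) (1 - x ^ 2 / 2) x := by
        have := ((hasDerivAt_id x).sub (((hasDerivAt_pow 3 x)).div_const 6))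
        exact this.congr_deriv (by norm_num; ring)
      exact h1.sub h2)
    (by simp)
    (fun y _ => by have := Real.one_sub_sq_div_two_le_cos (x := y); linarith)
    x hx
  linarith

lemma cos_le_poly (x : ℝ) (hx : 0 ≤ x) : Real.cos x ≤ 1 - x ^ 2 / 2 + x ^ 4 / 24 := by
  have := mono_nonneg (F := fun x => 1 - x ^ 2 / 2 + x ^ 4 / 24 - Real.cos x)
    (F' := fun x => -(x) + x ^ 3 / 6 + Real.sin x)
    (fun x => by
      have h1 := Real.hasDerivAt_cos x
      have h2 : HasDerivAt (fun x : ℝ => 1 - x ^ 2 / 2 + x ^ 4 / 24)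
          (-x + x ^ 3 / 6) x := by
        have := (((hasDerivAt_const x (1:ℝ)).sub ((hasDerivAt_pow 2 x).div_const 2)).add
          ((hasDerivAt_pow 4 x).div_const 24))
        exact this.congr_deriv (by norm_num; ring)
      have := h2.sub h1
      exact this.congr_deriv (by ring))
    (by simp)
    (fun y hy => by have := sin_ge_poly y hy; linarith)
    x hx
  linarith

lemma sin_le_poly (x : ℝ) (hx : 0 ≤ x) : Real.sin x ≤ x - x ^ 3 / 6 + x ^ 5 / 120 := by
  have := mono_nonneg (F := fun x => x - x ^ 3 / 6 + x ^ 5 / 120 - Real.sin x)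
    (F' := fun x => 1 - x ^ 2 / 2 + x ^ 4 / 24 - Real.cos x)
    (fun x => by
      have h1 := Real.hasDerivAt_sin x
      have h2 : HasDerivAt (fun x : ℝ => x - x ^ 3 / 6 + x ^ 5 / 120)
          (1 - x ^ 2 / 2 + x ^ 4 / 24) x := by
        have := (((hasDerivAt_id x).sub ((hasDerivAt_pow 3 x).div_const 6)).add
          ((hasDerivAt_pow 5 x).div_const 120))
        exact this.congr_deriv (by norm_num; ring)
      exact h2.sub h1)
    (by simp)
    (fun y hy => by have := cos_le_poly y hy; linarith)
    x hx
  linarith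

lemma abs_sin_poly (x : ℝ) (hx : 0 ≤ x) : |Real.sin x - (x - x ^ 3 / 6)| ≤ x ^ 5 / 120 := by
  rw [abs_le]
  constructor
  · have := sin_ge_poly x hx
    nlinarith [pow_nonneg hx 5]
  · have := sin_le_poly x hx; linarith

lemma abs_cos_poly (x : ℝ) (hx : 0 ≤ x) : |Real.cos x - (1 - x ^ 2 / 2)| ≤ x ^ 4 / 24 := by
  rw [abs_le]
  constructor
  · have := Real.one_sub_sq_div_two_le_cos (x := x)
    nlinarith [pow_nonneg hx 4]
  · have := cos_le_poly x hx; linarith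

lemma abs_cossin_poly (x : ℝ) (hx : 0 ≤ x) :
    |Real.cos x * Real.sin x - (x - 2 / 3 * x ^ 3)| ≤ 2 / 15 * x ^ 5 := by
  have h2x : (0:ℝ) ≤ 2 * x := by linarith
  have := abs_sin_poly (2 * x) h2x
  rw [Real.sin_two_mul] at this
  have h : cos x * sin x - (x - 2 / 3 * x ^ 3)
      = (2 * sin x * cos x - (2 * x - (2 * x) ^ 3 / 6)) / 2 := by ring
  rw [h, abs_div]
  rw [show |(2:ℝ)| = 2 by norm_num]
  nlinarith [this]

lemma abs4 (a b c d : ℝ) : |a + b - c - d| ≤ |a| + |b| + |c| + |d| := by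
  have h : a + b - c - d = a + b + -c + -d := by ring
  rw [h]
  calc |a + b + -c + -d| ≤ |a + b + -c| + |-d| := abs_add_le _ _
    _ ≤ |a + b| + |-c| + |-d| := by linarith [abs_add_le (a + b) (-c)]
    _ ≤ |a| + |b| + |c| + |d| := by rw [abs_neg, abs_neg]; linarith [abs_add_le a b]

lemma mono_mul {a b : ℝ} (ha : 0 ≤ a) (hab : a ≤ b) (m n : ℕ) :
    a ^ m * b ^ n ≤ b ^ (m + n) := by
  have hb : 0 ≤ b := le_trans ha hab
  calc a ^ m * b ^ n ≤ b ^ m * b ^ n :=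
        mul_le_mul_of_nonneg_right (pow_le_pow_left₀ ha hab m) (pow_nonneg hb n)
    _ = b ^ (m + n) := (pow_add b m n).symm
set_option maxHeartbeats 1000000 in
theorem A0_exceptional_expansion (R1 R2 θ1 θ2 : ℝ) (hR1 : 0 < R1) (hR12 : R1 < R2)
    (hC0 : R1 ^ 2 * R2 ^ 2 + R1 ^ 2 * R2 * θ2 + R1 * R2 ^ 2 * θ1
      + θ1 * θ2 * R1 * (R2 - R1) = 0) :
    let A0 : ℝ → ℝ := fun k =>
      R1 ^ 2 * R2 ^ 2 * k ^ 2
      + R1 ^ 2 * k * Real.cos (k * R2) * Real.sin (k * R2) * θ2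
      + R2 ^ 2 * k * Real.cos (k * R1) * Real.sin (k * R1) * θ1
      + θ1 * θ2 * (Real.cos (k * R1) * Real.cos (k * R2) * Real.sin (k * R1) * Real.sin (k * R2)
          - Real.cos (k * R2) ^ 2 * Real.sin (k * R1) ^ 2)
    let C2 : ℝ := -(2 / 3) * R1 ^ 2 * R2 ^ 3 * θ2 - (2 / 3) * R1 ^ 3 * R2 ^ 2 * θ1
      + θ1 * θ2 * (-(2 / 3) * (R1 ^ 3 * R2 + R1 * R2 ^ 3) + R1 ^ 2 * R2 ^ 2 + (1 / 3) * R1 ^ 4)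
    ∃ C > 0, ∃ ε > 0, ∀ k : ℝ, 0 < k → k < ε → |A0 k - C2 * k ^ 4| ≤ C * k ^ 6 := by
  intro A0 C2
  have hR2 : 0 < R2 := lt_trans hR1 hR12
  refine ⟨2/15 * |θ2| * R1^2 * R2^5 + 2/15 * |θ1| * R2^2 * R1^5 + 2 * |θ1*θ2| * R2^6 + 1,
    by positivity, 1/R2, by positivity, ?_⟩
  intro k hk hkε
  simp only [A0, C2]
  have hx2le1 : k * R2 ≤ 1 := le_of_lt ((lt_div_iff₀ hR2).mp hkε)
  set x1 := k * R1 with hx1def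
  set x2 := k * R2 with hx2def
  have hx1 : 0 ≤ x1 := by positivity
  have hx2 : 0 ≤ x2 := by positivity
  have hx12 : x1 ≤ x2 := by
    rw [hx1def, hx2def]; nlinarith
  set s1 := Real.sin x1
  set s2 := Real.sin x2
  set c1 := Real.cos x1
  set c2 := Real.cos x2
  -- basic bounds
  have hu1 : |c1 * s1 - (x1 - 2/3 * x1 ^ 3)| ≤ 2/15 * x1 ^ 5 := abs_cossin_poly x1 hx1
  have hu2 : |c2 * s2 - (x2 - 2/3 * x2 ^ 3)| ≤ 2/15 * x2 ^ 5 := abs_cossin_poly x2 hx2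
  have hE1 : |s1 - (x1 - x1 ^ 3 / 6)| ≤ x1 ^ 5 / 120 := abs_sin_poly x1 hx1
  have hF2 : |c2 - (1 - x2 ^ 2 / 2)| ≤ x2 ^ 4 / 24 := abs_cos_poly x2 hx2
  have hs1 : |s1| ≤ x1 := by
    have := Real.abs_sin_le_abs (x := x1); rwa [abs_of_nonneg hx1] at this
  have hs2 : |s2| ≤ x2 := by
    have := Real.abs_sin_le_abs (x := x2); rwa [abs_of_nonneg hx2] at this
  have hc1 : |c1| ≤ 1 := Real.abs_cos_le_one x1
  have hc2 : |c2| ≤ 1 := Real.abs_cos_le_one x2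
  have hq2 : |1 - x2 ^ 2 / 2| ≤ 1 := by
    rw [abs_le]
    constructor
    · nlinarith [hx2, hx2le1, sq_nonneg x2]
    · nlinarith [sq_nonneg x2]
  have hu1abs : |c1 * s1| ≤ x1 := by
    rw [abs_mul]
    calc |c1| * |s1| ≤ 1 * x1 := by
          exact mul_le_mul hc1 hs1 (abs_nonneg _) zero_le_one
      _ = x1 := one_mul x1
  have hu2abs : |c2 * s2| ≤ x2 := by
    rw [abs_mul]
    calc |c2| * |s2| ≤ 1 * x2 := by
          exact mul_le_mul hc2 hs2 (abs_nonneg _) zero_le_one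
      _ = x2 := one_mul x2
  have hvabs : |c2 * s1| ≤ x1 := by
    rw [abs_mul]
    calc |c2| * |s1| ≤ 1 * x1 := by
          exact mul_le_mul hc2 hs1 (abs_nonneg _) zero_le_one
      _ = x1 := one_mul x1
  have hx1le1 : x1 ≤ 1 := le_trans hx12 hx2le1
  have hx2sq : x2 ^ 2 ≤ 1 := by nlinarith [hx2, hx2le1]
  have hx1sq : x1 ^ 2 ≤ 1 := by nlinarith [hx1, hx1le1]
  have hQa : x1 ^ 3 ≤ x1 := by nlinarith [mul_le_mul_of_nonneg_left hx1sq hx1]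
  have hQb : x1 * x2 ^ 2 ≤ x1 := by nlinarith [mul_le_mul_of_nonneg_left hx2sq hx1]
  have hQc : x2 ^ 3 ≤ x2 := by nlinarith [mul_le_mul_of_nonneg_left hx2sq hx2]
  have hP2abs : |x2 - 2/3 * x2 ^ 3| ≤ x2 := by
    rw [abs_le]
    constructor
    · nlinarith [hQc, pow_nonneg hx2 3]
    · nlinarith [hQc, pow_nonneg hx2 3]
  have hQabs : |x1 - x1 ^ 3 / 6 - x1 * x2 ^ 2 / 2| ≤ x1 := by
    rw [abs_le]
    constructor
    · nlinarith [pow_nonneg hx1 3, mul_nonneg hx1 (pow_nonneg hx2 2)]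
    · nlinarith [pow_nonneg hx1 3, mul_nonneg hx1 (pow_nonneg hx2 2)]
  -- monomial comparisons
  have hm1 : x1 * x2 ^ 4 ≤ x2 ^ 5 := by simpa using mono_mul hx1 hx12 1 4
  have hm2 : x1 ^ 5 ≤ x2 ^ 5 := pow_le_pow_left₀ hx1 hx12 5
  have hm3 : x1 ^ 3 * x2 ^ 2 ≤ x2 ^ 5 := by simpa using mono_mul hx1 hx12 3 2
  have hm4 : x1 * x2 ^ 5 ≤ x2 ^ 6 := by simpa using mono_mul hx1 hx12 1 5
  have hm5 : x1 ^ 5 * x2 ≤ x2 ^ 6 := by simpa using mono_mul hx1 hx12 5 1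
  have hm6 : x1 ^ 3 * x2 ^ 3 ≤ x2 ^ 6 := by simpa using mono_mul hx1 hx12 3 3
  have hm7 : x1 ^ 6 ≤ x2 ^ 6 := pow_le_pow_left₀ hx1 hx12 6
  have hm8 : x1 ^ 4 * x2 ^ 2 ≤ x2 ^ 6 := by simpa using mono_mul hx1 hx12 4 2
  have hm9 : x1 ^ 2 * x2 ^ 4 ≤ x2 ^ 6 := by simpa using mono_mul hx1 hx12 2 4
  clear_value x1 x2 s1 s2 c1 c2
  -- bound for v - Q
  have hvQ : |c2 * s1 - (x1 - x1 ^ 3 / 6 - x1 * x2 ^ 2 / 2)| ≤ 2/15 * x2 ^ 5 := by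
    have hid : c2 * s1 - (x1 - x1 ^ 3 / 6 - x1 * x2 ^ 2 / 2)
        = (c2 - (1 - x2 ^ 2 / 2)) * s1 + (1 - x2 ^ 2 / 2) * (s1 - (x1 - x1 ^ 3 / 6))
          + x1 ^ 3 * x2 ^ 2 / 12 := by ring
    rw [hid]
    have t1 : |(c2 - (1 - x2 ^ 2 / 2)) * s1| ≤ x2 ^ 4 / 24 * x1 := by
      rw [abs_mul]; exact mul_le_mul hF2 hs1 (abs_nonneg _) (by positivity)
    have t2 : |(1 - x2 ^ 2 / 2) * (s1 - (x1 - x1 ^ 3 / 6))| ≤ 1 * (x1 ^ 5 / 120) := by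
      rw [abs_mul]; exact mul_le_mul hq2 hE1 (abs_nonneg _) zero_le_one
    refine le_trans (abs_add_three _ _ _) ?_
    rw [abs_of_nonneg (div_nonneg (mul_nonneg (pow_nonneg hx1 3) (pow_nonneg hx2 2))
      (by norm_num) : (0:ℝ) ≤ x1 ^ 3 * x2 ^ 2 / 12)]
    linarith [t1, t2, hm1, hm2, hm3]
  -- bound for the θ1θ2 block
  have hT12 : |c1 * s1 * (c2 * s2) - (c2 * s1) ^ 2
      - (x1 * x2 - 2/3 * (x1 ^ 3 * x2 + x1 * x2 ^ 3) - x1 ^ 2 + x1 ^ 2 * x2 ^ 2 + x1 ^ 4 / 3)|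
      ≤ 2 * x2 ^ 6 := by
    set P1 := x1 - 2/3 * x1 ^ 3 with hP1
    set P2 := x2 - 2/3 * x2 ^ 3 with hP2
    set Q := x1 - x1 ^ 3 / 6 - x1 * x2 ^ 2 / 2 with hQ
    have hA : |c1 * s1 * (c2 * s2) - P1 * P2| ≤ 4/15 * x2 ^ 6 := by
      have h1 : |c1 * s1 * (c2 * s2) - P1 * P2|
          ≤ |c1 * s1| * |c2 * s2 - P2| + |c1 * s1 - P1| * |P2| := by
        have hid : c1 * s1 * (c2 * s2) - P1 * P2
            = c1 * s1 * (c2 * s2 - P2) + (c1 * s1 - P1) * P2 := by ring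
        rw [hid]
        calc |c1 * s1 * (c2 * s2 - P2) + (c1 * s1 - P1) * P2|
            ≤ |c1 * s1 * (c2 * s2 - P2)| + |(c1 * s1 - P1) * P2| := abs_add_le _ _
          _ = |c1 * s1| * |c2 * s2 - P2| + |c1 * s1 - P1| * |P2| := by
              rw [abs_mul (c1 * s1) (c2 * s2 - P2), abs_mul (c1 * s1 - P1) P2]
      have h2 : |c1 * s1| * |c2 * s2 - P2| ≤ x1 * (2/15 * x2 ^ 5) :=
        mul_le_mul hu1abs hu2 (abs_nonneg _) hx1
      have h3 : |c1 * s1 - P1| * |P2| ≤ 2/15 * x1 ^ 5 * x2 :=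
        mul_le_mul hu1 hP2abs (abs_nonneg _)
          (mul_nonneg (by norm_num) (pow_nonneg hx1 5))
      linarith [h1, h2, h3, hm4, hm5]
    have hB : |P1 * P2 - (x1 * x2 - 2/3 * (x1 ^ 3 * x2 + x1 * x2 ^ 3))| ≤ 4/9 * x2 ^ 6 := by
      have hid : P1 * P2 - (x1 * x2 - 2/3 * (x1 ^ 3 * x2 + x1 * x2 ^ 3))
          = 4/9 * (x1 ^ 3 * x2 ^ 3) := by rw [hP1, hP2]; ring
      rw [hid, abs_of_nonneg (mul_nonneg (by norm_num)
        (mul_nonneg (pow_nonneg hx1 3) (pow_nonneg hx2 3)))]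
      linarith [hm6]
    have hC : |(c2 * s1) ^ 2 - Q ^ 2| ≤ 4/15 * x2 ^ 6 := by
      have hid : (c2 * s1) ^ 2 - Q ^ 2 = (c2 * s1 - Q) * (c2 * s1 + Q) := by ring
      rw [hid, abs_mul]
      have h4 : |c2 * s1 + Q| ≤ 2 * x1 := by
        calc |c2 * s1 + Q| ≤ |c2 * s1| + |Q| := abs_add_le _ _
          _ ≤ x1 + x1 := add_le_add hvabs hQabs
          _ = 2 * x1 := by ring
      have h5 : |c2 * s1 - Q| * |c2 * s1 + Q| ≤ 2/15 * x2 ^ 5 * (2 * x1) :=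
        mul_le_mul hvQ h4 (abs_nonneg _)
          (mul_nonneg (by norm_num) (pow_nonneg hx2 5))
      linarith [h5, hm4]
    have hD : |Q ^ 2 - (x1 ^ 2 - x1 ^ 4 / 3 - x1 ^ 2 * x2 ^ 2)| ≤ 1/2 * x2 ^ 6 := by
      have hid : Q ^ 2 - (x1 ^ 2 - x1 ^ 4 / 3 - x1 ^ 2 * x2 ^ 2)
          = x1 ^ 6 / 36 + x1 ^ 4 * x2 ^ 2 / 6 + x1 ^ 2 * x2 ^ 4 / 4 := by rw [hQ]; ring
      rw [hid, abs_of_nonneg (by positivity)]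
      linarith [hm7, hm8, hm9, pow_nonneg hx2 6]
    have hsplit : c1 * s1 * (c2 * s2) - (c2 * s1) ^ 2
        - (x1 * x2 - 2/3 * (x1 ^ 3 * x2 + x1 * x2 ^ 3) - x1 ^ 2 + x1 ^ 2 * x2 ^ 2 + x1 ^ 4 / 3)
        = (c1 * s1 * (c2 * s2) - P1 * P2)
          + (P1 * P2 - (x1 * x2 - 2/3 * (x1 ^ 3 * x2 + x1 * x2 ^ 3)))
          - ((c2 * s1) ^ 2 - Q ^ 2)
          - (Q ^ 2 - (x1 ^ 2 - x1 ^ 4 / 3 - x1 ^ 2 * x2 ^ 2)) := by ring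
    rw [hsplit]
    refine le_trans (abs4 _ _ _ _) ?_
    linarith [hA, hB, hC, hD, pow_nonneg hx2 6]
  -- the key algebraic identity
  have key : R1 ^ 2 * R2 ^ 2 * k ^ 2
      + R1 ^ 2 * k * c2 * s2 * θ2 + R2 ^ 2 * k * c1 * s1 * θ1
      + θ1 * θ2 * (c1 * c2 * s1 * s2 - c2 ^ 2 * s1 ^ 2)
      - (-(2 / 3) * R1 ^ 2 * R2 ^ 3 * θ2 - (2 / 3) * R1 ^ 3 * R2 ^ 2 * θ1
        + θ1 * θ2 * (-(2 / 3) * (R1 ^ 3 * R2 + R1 * R2 ^ 3) + R1 ^ 2 * R2 ^ 2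
          + (1 / 3) * R1 ^ 4)) * k ^ 4
      = θ2 * R1 ^ 2 * k * (c2 * s2 - (x2 - 2/3 * x2 ^ 3))
        + θ1 * R2 ^ 2 * k * (c1 * s1 - (x1 - 2/3 * x1 ^ 3))
        + θ1 * θ2 * (c1 * s1 * (c2 * s2) - (c2 * s1) ^ 2
          - (x1 * x2 - 2/3 * (x1 ^ 3 * x2 + x1 * x2 ^ 3) - x1 ^ 2 + x1 ^ 2 * x2 ^ 2
            + x1 ^ 4 / 3)) := by
    rw [hx1def, hx2def]
    linear_combination k ^ 2 * hC0
  rw [key]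
  -- final bounds
  have b1 : |θ2 * R1 ^ 2 * k * (c2 * s2 - (x2 - 2/3 * x2 ^ 3))|
      ≤ |θ2| * R1 ^ 2 * k * (2/15 * x2 ^ 5) := by
    rw [abs_mul]
    have : |θ2 * R1 ^ 2 * k| = |θ2| * R1 ^ 2 * k := by
      rw [abs_mul, abs_mul, abs_of_nonneg (le_of_lt hk), abs_of_nonneg (by positivity : (0:ℝ) ≤ R1 ^ 2)]
    rw [this]
    exact mul_le_mul_of_nonneg_left hu2
      (mul_nonneg (mul_nonneg (abs_nonneg _) (pow_nonneg hR1.le 2)) hk.le)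
  have b2 : |θ1 * R2 ^ 2 * k * (c1 * s1 - (x1 - 2/3 * x1 ^ 3))|
      ≤ |θ1| * R2 ^ 2 * k * (2/15 * x1 ^ 5) := by
    rw [abs_mul]
    have : |θ1 * R2 ^ 2 * k| = |θ1| * R2 ^ 2 * k := by
      rw [abs_mul, abs_mul, abs_of_nonneg (le_of_lt hk), abs_of_nonneg (by positivity : (0:ℝ) ≤ R2 ^ 2)]
    rw [this]
    exact mul_le_mul_of_nonneg_left hu1
      (mul_nonneg (mul_nonneg (abs_nonneg _) (pow_nonneg hR2.le 2)) hk.le)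
  have b3 : |θ1 * θ2 * (c1 * s1 * (c2 * s2) - (c2 * s1) ^ 2
      - (x1 * x2 - 2/3 * (x1 ^ 3 * x2 + x1 * x2 ^ 3) - x1 ^ 2 + x1 ^ 2 * x2 ^ 2 + x1 ^ 4 / 3))|
      ≤ |θ1 * θ2| * (2 * x2 ^ 6) := by
    rw [abs_mul]
    exact mul_le_mul_of_nonneg_left hT12 (abs_nonneg _)
  have e1 : |θ2| * R1 ^ 2 * k * (2/15 * x2 ^ 5) = 2/15 * |θ2| * R1 ^ 2 * R2 ^ 5 * k ^ 6 := by
    rw [hx2def]; ring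
  have e2 : |θ1| * R2 ^ 2 * k * (2/15 * x1 ^ 5) = 2/15 * |θ1| * R2 ^ 2 * R1 ^ 5 * k ^ 6 := by
    rw [hx1def]; ring
  have e3 : |θ1 * θ2| * (2 * x2 ^ 6) = 2 * |θ1 * θ2| * R2 ^ 6 * k ^ 6 := by
    rw [hx2def]; ring
  have hk6 : (0:ℝ) ≤ k ^ 6 := by positivity
  refine le_trans (abs_add_three _ _ _) ?_
  linarith [b1, b2, b3, e1, e2, e3, hk6]
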